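/- Let 0 < R ≤ ∞ and let ψ be a quasiconcave function on [0,R). Then there exists a constant C > 0 such that (T_ψ f)**(t) ≤ C · (T_ψ f(t) + f**(t)) for every nonnegative nonincreasing measurable function f on (0,R) and every t ∈ (0,R) if and only if ψ satisfies the B-condition. -/

import Mathlib

open MeasureTheory Set ENNReal Filter

noncomputable section

/-- The open interval `(0, R)` inside `ℝ`, where `R ∈ (0, ∞]` is an extended real. -/
def DomIoo (R : ℝ≥0∞) : Set ℝ := {t : ℝ | 0 < t ∧ ENNReal.ofReal t < R}

/-- The part of `(0, R)` lying strictly above `t`. -/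
def DomAbove (R : ℝ≥0∞) (t : ℝ) : Set ℝ := {s : ℝ | t < s ∧ ENNReal.ofReal s < R}

/-- `φ : [0, R) → [0, ∞)` is quasiconcave: it vanishes exactly at `0`, is nondecreasing,
and `t ↦ φ(t)/t` is nonincreasing on `(0, R)`.  (Values on `(0, R)` are finite.) -/
def QuasiConcaveOn (R : ℝ≥0∞) (φ : ℝ → ℝ≥0∞) : Prop :=
  φ 0 = 0 ∧
  (∀ t ∈ DomIoo R, 0 < φ t ∧ φ t < ⊤) ∧
  (∀ s t : ℝ, 0 ≤ s → s ≤ t → t ∈ DomIoo R → φ s ≤ φ t) ∧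
  (∀ s t : ℝ, s ∈ DomIoo R → s ≤ t → t ∈ DomIoo R →
    φ t / ENNReal.ofReal t ≤ φ s / ENNReal.ofReal s)

/-- `f` is a nonnegative nonincreasing measurable function on `(0, R)`
(nonnegativity is built into the codomain `[0, ∞]`). -/
def NonincOn (R : ℝ≥0∞) (f : ℝ → ℝ≥0∞) : Prop :=
  Measurable f ∧ ∀ s t : ℝ, s ∈ DomIoo R → s ≤ t → t ∈ DomIoo R → f t ≤ f s

/-- The level function `f**(t) = (1/t) ∫₀ᵗ f(s) ds`. -/
def dstar (f : ℝ → ℝ≥0∞) (t : ℝ) : ℝ≥0∞ :=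
  (∫⁻ s in Ioo (0 : ℝ) t, f s) / ENNReal.ofReal t

/-- The supremum operator `S_φ f(t) = (1/φ(t)) ⋅ sup_{0<s<t} φ(s) f(s)`. -/
def Ssup (φ f : ℝ → ℝ≥0∞) (t : ℝ) : ℝ≥0∞ :=
  (⨆ s ∈ Ioo (0 : ℝ) t, φ s * f s) / φ t

/-- The supremum operator `T_ψ f(t) = (1/ψ(t)) ⋅ sup_{t<s<R} ψ(s) f(s)`. -/
def Tsup (R : ℝ≥0∞) (ψ f : ℝ → ℝ≥0∞) (t : ℝ) : ℝ≥0∞ :=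
  (⨆ s ∈ DomAbove R t, ψ s * f s) / ψ t

/-- The `B`-condition: `∫₀ᵗ ds/φ(s) ≤ C ⋅ t/φ(t)` on `(0, R)` for some constant `C > 0`. -/
def BCond (R : ℝ≥0∞) (φ : ℝ → ℝ≥0∞) : Prop :=
  ∃ C : ℝ, 0 < C ∧ ∀ t ∈ DomIoo R,
    (∫⁻ s in Ioo (0 : ℝ) t, 1 / φ s) ≤ ENNReal.ofReal C * (ENNReal.ofReal t / φ t)

/-- A weight on `(0, R)`: positive, measurable and locally integrable
(with finite integral near the origin). -/
def IsWeight (R : ℝ≥0∞) (w : ℝ → ℝ≥0∞) : Prop :=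
  Measurable w ∧ (∀ t ∈ DomIoo R, 0 < w t ∧ w t < ⊤) ∧
  ∀ t ∈ DomIoo R, (∫⁻ s in Ioo (0 : ℝ) t, w s) < ⊤

/-- Nontriviality of a weight `w` for the exponent `p`:
`∫₁^∞ s^{-p} w(s) ds < ∞` when `R = ∞`, and `∫₀ᴿ s^{-p} w(s) ds = ∞` when `R < ∞`. -/
def Nontriv (R : ℝ≥0∞) (p : ℝ) (w : ℝ → ℝ≥0∞) : Prop :=
  (R = ⊤ → (∫⁻ s in Ioi (1 : ℝ), ENNReal.ofReal s ^ (-p) * w s) < ⊤) ∧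
  (R ≠ ⊤ → (∫⁻ s in DomIoo R, ENNReal.ofReal s ^ (-p) * w s) = ⊤)

lemma mem_dom_of_le {R : ℝ≥0∞} {t u : ℝ} (ht : t ∈ DomIoo R) (h0 : 0 < u) (hut : u ≤ t) :
    u ∈ DomIoo R :=
  ⟨h0, lt_of_le_of_lt (ENNReal.ofReal_le_ofReal hut) ht.2⟩

/-- key sup lemma -/
lemma psi_le_biSup {R : ℝ≥0∞} {ψ : ℝ → ℝ≥0∞} (hψ : QuasiConcaveOn R ψ)
    {a s : ℝ} (ha : a ∈ DomIoo R) (hs : 0 ≤ s) (hsa : s < a) :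
    ψ a ≤ ⨆ u ∈ Ioo s a, ψ u := by
  obtain ⟨-, hpos, hmono, hqc⟩ := hψ
  have haO : ENNReal.ofReal a ≠ 0 := by
    simp [ENNReal.ofReal_eq_zero]; linarith [ha.1]
  have haT : ENNReal.ofReal a ≠ ⊤ := ofReal_ne_top
  have h1 : ENNReal.ofReal a ≤ ⨆ u ∈ Ioo s a, ENNReal.ofReal u := by
    refine le_of_forall_lt ?_
    intro c hc
    have hcT : c ≠ ⊤ := hc.ne_top
    have hca : c.toReal < a := by
      have := (ENNReal.lt_ofReal_iff_toReal_lt hcT).1 hc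
      linarith
    set u : ℝ := max ((s+a)/2) ((c.toReal + a)/2) with hu
    have hu1 : s < u := lt_max_of_lt_left (by linarith)
    have hu2 : u < a := max_lt (by linarith) (by linarith)
    have hcu : c < ENNReal.ofReal u := by
      rw [ENNReal.lt_ofReal_iff_toReal_lt hcT]
      exact lt_of_lt_of_le (by linarith) (le_max_right _ _)
    exact lt_of_lt_of_le hcu (le_iSup₂_of_le u ⟨hu1, hu2⟩ le_rfl)
  calc ψ a = ψ a / ENNReal.ofReal a * ENNReal.ofReal a :=
        (ENNReal.div_mul_cancel haO haT).symm
    _ ≤ ψ a / ENNReal.ofReal a * ⨆ u ∈ Ioo s a, ENNReal.ofReal u :=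
        mul_le_mul_right h1 _
    _ = ⨆ u ∈ Ioo s a, ψ a / ENNReal.ofReal a * ENNReal.ofReal u := by
        simp_rw [ENNReal.mul_iSup]
    _ ≤ ⨆ u ∈ Ioo s a, ψ u := by
        refine iSup₂_mono fun u hu => ?_
        have hud : u ∈ DomIoo R := mem_dom_of_le ha (lt_of_le_of_lt hs hu.1) hu.2.le
        have huO : ENNReal.ofReal u ≠ 0 := by
          simp [ENNReal.ofReal_eq_zero]; linarith [hud.1]
        calc ψ a / ENNReal.ofReal a * ENNReal.ofReal u
            ≤ ψ u / ENNReal.ofReal u * ENNReal.ofReal u :=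
              mul_le_mul_left (hqc u a hud hu.2.le ha) _
          _ = ψ u := ENNReal.div_mul_cancel huO ofReal_ne_top

/-- clamp of ψ to [0,t] -/
def clampPsi (t : ℝ) (ψ : ℝ → ℝ≥0∞) : ℝ → ℝ≥0∞ := fun s => ψ (min (max s 0) t)

lemma clampPsi_eq {t : ℝ} (ψ : ℝ → ℝ≥0∞) {s : ℝ} (h0 : 0 < s) (hst : s ≤ t) :
    clampPsi t ψ s = ψ s := by
  unfold clampPsi
  rw [max_eq_left h0.le, min_eq_left hst]

lemma clampPsi_monotone {R : ℝ≥0∞} {ψ : ℝ → ℝ≥0∞} (hψ : QuasiConcaveOn R ψ)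
    {t : ℝ} (ht : t ∈ DomIoo R) : Monotone (clampPsi t ψ) := by
  intro x y hxy
  unfold clampPsi
  set x' := min (max x 0) t
  set y' := min (max y 0) t
  have hx0 : 0 ≤ x' := le_min (le_max_right _ _) ht.1.le
  have hy0 : 0 ≤ y' := le_min (le_max_right _ _) ht.1.le
  have hxy' : x' ≤ y' := min_le_min (max_le_max hxy le_rfl) le_rfl
  rcases eq_or_lt_of_le hy0 with h | h
  · have : x' = y' := le_antisymm (h ▸ hxy') (h ▸ hx0)
    rw [this]
  · exact hψ.2.2.1 x' y' hx0 hxy' (mem_dom_of_le ht h (min_le_right _ _))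

lemma clampPsi_measurable {R : ℝ≥0∞} {ψ : ℝ → ℝ≥0∞} (hψ : QuasiConcaveOn R ψ)
    {t : ℝ} (ht : t ∈ DomIoo R) : Measurable (clampPsi t ψ) :=
  (clampPsi_monotone hψ ht).measurable

lemma necessity (R : ℝ≥0∞) (ψ : ℝ → ℝ≥0∞) (hψ : QuasiConcaveOn R ψ)
    (H : ∃ C : ℝ, 0 < C ∧ ∀ f : ℝ → ℝ≥0∞, NonincOn R f → ∀ t ∈ DomIoo R,
        dstar (Tsup R ψ f) t ≤ ENNReal.ofReal C * (Tsup R ψ f t + dstar f t)) :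
    BCond R ψ := by
  obtain ⟨C, hC, hIneq⟩ := H
  refine ⟨C, hC, fun a ha => ?_⟩
  have hψa0 : ψ a ≠ 0 := (hψ.2.1 a ha).1.ne'
  have hψaT : ψ a ≠ ⊤ := (hψ.2.1 a ha).2.ne
  have haO : ENNReal.ofReal a ≠ 0 := by
    simp [ENNReal.ofReal_eq_zero]; linarith [ha.1]
  have haT : ENNReal.ofReal a ≠ ⊤ := ofReal_ne_top
  set f : ℝ → ℝ≥0∞ := (Ioo (0:ℝ) a).indicator (fun _ => (ψ a)⁻¹) with hf
  have hfmem : ∀ u : ℝ, u ∈ Ioo (0:ℝ) a → f u = (ψ a)⁻¹ := fun u hu => by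
    simp [hf, indicator_of_mem hu]
  have hfnot : ∀ u : ℝ, u ∉ Ioo (0:ℝ) a → f u = 0 := fun u hu => by
    simp [hf, indicator_of_notMem hu]
  have hfN : NonincOn R f := by
    refine ⟨measurable_const.indicator measurableSet_Ioo, fun s t hs hst ht => ?_⟩
    by_cases h : t < a
    · rw [hfmem t ⟨ht.1, h⟩, hfmem s ⟨hs.1, lt_of_le_of_lt hst h⟩]
    · rw [hfnot t (fun hmem => h hmem.2)]; exact zero_le
  -- Tsup at a is 0
  have hTa : Tsup R ψ f a = 0 := by
    unfold Tsup
    have : (⨆ s ∈ DomAbove R a, ψ s * f s) = 0 := by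
      refine le_antisymm (iSup₂_le fun u hu => ?_) zero_le
      rw [hfnot u (fun hmem => absurd hmem.2 (not_lt.2 hu.1.le))]
      simp
    rw [this, ENNReal.zero_div]
  -- dstar f a = (ψ a)⁻¹
  have hda : dstar f a ≤ (ψ a)⁻¹ := by
    unfold dstar
    rw [ENNReal.div_le_iff haO haT]
    calc (∫⁻ s in Ioo (0:ℝ) a, f s) ≤ ∫⁻ _ in Ioo (0:ℝ) a, (ψ a)⁻¹ := by
          refine lintegral_mono_ae ((ae_restrict_iff' measurableSet_Ioo).2
            (Filter.Eventually.of_forall fun u hu => ?_))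
          rw [hfmem u hu]
      _ = (ψ a)⁻¹ * ENNReal.ofReal a := by
          rw [setLIntegral_const, Real.volume_Ioo, sub_zero]
  -- Tsup f s ≥ (ψ s)⁻¹ on (0,a)
  have hTlow : ∀ s ∈ Ioo (0:ℝ) a, (ψ s)⁻¹ ≤ Tsup R ψ f s := by
    intro s hs
    have key : ψ a * (ψ a)⁻¹ ≤ ⨆ u ∈ DomAbove R s, ψ u * f u := by
      have h1 : (⨆ u ∈ Ioo s a, ψ u) * (ψ a)⁻¹ ≤ ⨆ u ∈ DomAbove R s, ψ u * f u := by
        rw [ENNReal.iSup_mul]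
        simp_rw [ENNReal.iSup_mul]
        refine iSup₂_le fun u hu => ?_
        have huD : u ∈ DomAbove R s :=
          ⟨hu.1, lt_of_le_of_lt (ENNReal.ofReal_le_ofReal hu.2.le) ha.2⟩
        have : ψ u * (ψ a)⁻¹ = ψ u * f u := by
          rw [hfmem u ⟨lt_trans hs.1 hu.1, hu.2⟩]
        rw [this]
        exact le_iSup₂_of_le u huD le_rfl
      exact le_trans (mul_le_mul_left (psi_le_biSup hψ ha hs.1.le hs.2) _) h1
    rw [ENNReal.mul_inv_cancel hψa0 hψaT] at key
    unfold Tsup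
    calc (ψ s)⁻¹ = 1 / ψ s := (one_div _).symm
      _ ≤ (⨆ u ∈ DomAbove R s, ψ u * f u) / ψ s := ENNReal.div_le_div_right key _
  -- assemble
  have hmain := hIneq f hfN a ha
  rw [hTa, zero_add] at hmain
  have hlow : (∫⁻ s in Ioo (0:ℝ) a, 1 / ψ s) / ENNReal.ofReal a ≤ dstar (Tsup R ψ f) a := by
    unfold dstar
    refine ENNReal.div_le_div_right (lintegral_mono_ae ((ae_restrict_iff' measurableSet_Ioo).2
      (Filter.Eventually.of_forall fun s hs => ?_))) _
    rw [one_div]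
    exact hTlow s hs
  have : (∫⁻ s in Ioo (0:ℝ) a, 1 / ψ s) / ENNReal.ofReal a ≤ ENNReal.ofReal C * (ψ a)⁻¹ :=
    le_trans hlow (le_trans hmain (mul_le_mul_right hda _))
  rw [ENNReal.div_le_iff haO haT] at this
  calc (∫⁻ s in Ioo (0:ℝ) a, 1 / ψ s) ≤ ENNReal.ofReal C * (ψ a)⁻¹ * ENNReal.ofReal a := this
    _ = ENNReal.ofReal C * (ENNReal.ofReal a / ψ a) := by
        rw [ENNReal.div_eq_inv_mul, mul_assoc, mul_comm (ψ a)⁻¹]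

lemma vol_ofReal_lt (c : ℝ≥0∞) :
    volume ({l : ℝ | ENNReal.ofReal l < c} ∩ Ioi 0) = c := by
  rcases eq_or_ne c ⊤ with rfl | hc
  · have : {l : ℝ | ENNReal.ofReal l < ⊤} ∩ Ioi 0 = Ioi 0 := by
      ext x; simp [ofReal_lt_top]
    rw [this, Real.volume_Ioi]
  · have : {l : ℝ | ENNReal.ofReal l < c} ∩ Ioi 0 = Ioo 0 c.toReal := by
      ext x
      simp only [mem_inter_iff, mem_setOf_eq, mem_Ioi, mem_Ioo]
      constructor
      · rintro ⟨h1, h2⟩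
        exact ⟨h2, (ENNReal.ofReal_lt_iff_lt_toReal h2.le hc).1 h1⟩
      · rintro ⟨h1, h2⟩
        exact ⟨(ENNReal.ofReal_lt_iff_lt_toReal h1.le hc).2 h2, h1⟩
    rw [this, Real.volume_Ioo, sub_zero, ENNReal.ofReal_toReal hc]

lemma layercake (t : ℝ) {f : ℝ → ℝ≥0∞} (hf : Measurable f) :
    (∫⁻ l in Ioi (0:ℝ), volume ({u : ℝ | ENNReal.ofReal l < f u} ∩ Ioo 0 t)) =
      ∫⁻ u in Ioo (0:ℝ) t, f u := by
  have hmeas : MeasurableSet {p : ℝ × ℝ | ENNReal.ofReal p.1 < f p.2} :=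
    measurableSet_lt (ENNReal.measurable_ofReal.comp measurable_fst) (hf.comp measurable_snd)
  have h1 : ∀ l : ℝ, volume ({u : ℝ | ENNReal.ofReal l < f u} ∩ Ioo 0 t)
      = ∫⁻ u in Ioo (0:ℝ) t, ({u : ℝ | ENNReal.ofReal l < f u}).indicator (fun _ => 1) u := by
    intro l
    rw [lintegral_indicator_const (by exact measurableSet_lt measurable_const hf)]
    rw [Measure.restrict_apply (by exact measurableSet_lt measurable_const hf), one_mul]
  have h2 : ∀ u : ℝ, (∫⁻ l in Ioi (0:ℝ),
      ({l : ℝ | ENNReal.ofReal l < f u}).indicator (fun _ => 1) l) = f u := by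
    intro u
    rw [lintegral_indicator_const (by
      exact measurableSet_lt ENNReal.measurable_ofReal measurable_const)]
    rw [Measure.restrict_apply (by
      exact measurableSet_lt ENNReal.measurable_ofReal measurable_const), one_mul]
    exact vol_ofReal_lt (f u)
  calc (∫⁻ l in Ioi (0:ℝ), volume ({u : ℝ | ENNReal.ofReal l < f u} ∩ Ioo 0 t))
      = ∫⁻ l in Ioi (0:ℝ), ∫⁻ u in Ioo (0:ℝ) t,
          ({u : ℝ | ENNReal.ofReal l < f u}).indicator (fun _ => 1) u := by
        exact lintegral_congr h1
    _ = ∫⁻ u in Ioo (0:ℝ) t, ∫⁻ l in Ioi (0:ℝ),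
          ({l : ℝ | ENNReal.ofReal l < f u}).indicator (fun _ => 1) l := by
        apply lintegral_lintegral_swap
        apply Measurable.aemeasurable
        have : (Function.uncurry fun (l u : ℝ) =>
            ({u : ℝ | ENNReal.ofReal l < f u}).indicator (fun _ => (1:ℝ≥0∞)) u)
            = {p : ℝ × ℝ | ENNReal.ofReal p.1 < f p.2}.indicator (fun _ => 1) := by
          ext ⟨l, u⟩
          by_cases h : ENNReal.ofReal l < f u <;>
            simp [Function.uncurry, Set.indicator, h]
        rw [this]
        exact measurable_const.indicator hmeas
    _ = ∫⁻ u in Ioo (0:ℝ) t, f u := lintegral_congr h2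

lemma cancel1 {c d x : ℝ≥0∞} (h0 : c ≠ 0) (hT : c ≠ ⊤) : c * (d * (x / c)) = d * x := by
  rw [div_eq_mul_inv]
  calc c * (d * (x * c⁻¹)) = d * x * (c * c⁻¹) := by ring
    _ = d * x := by rw [ENNReal.mul_inv_cancel h0 hT, mul_one]

lemma cancel2 {c b d x : ℝ≥0∞} (h0 : c ≠ 0) (hT : c ≠ ⊤) :
    (c * b) * (d * (x / c)) = d * x * b := by
  rw [div_eq_mul_inv]
  calc (c * b) * (d * (x * c⁻¹)) = d * x * b * (c * c⁻¹) := by ring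
    _ = d * x * b := by rw [ENNReal.mul_inv_cancel h0 hT, mul_one]

lemma sufficiency (R : ℝ≥0∞) (ψ : ℝ → ℝ≥0∞) (hψ : QuasiConcaveOn R ψ)
    (hBC : BCond R ψ) :
    ∃ C : ℝ, 0 < C ∧ ∀ f : ℝ → ℝ≥0∞, NonincOn R f → ∀ t ∈ DomIoo R,
        dstar (Tsup R ψ f) t ≤ ENNReal.ofReal C * (Tsup R ψ f t + dstar f t) := by
  obtain ⟨C₀, hC₀, hB⟩ := hBC
  refine ⟨2 * C₀, by linarith, fun f hf t ht => ?_⟩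
  obtain ⟨hfm, hfmono⟩ := hf
  have hψt0 : ψ t ≠ 0 := (hψ.2.1 t ht).1.ne'
  have hψtT : ψ t ≠ ⊤ := (hψ.2.1 t ht).2.ne
  have htO : ENNReal.ofReal t ≠ 0 := by
    simp [ENNReal.ofReal_eq_zero]; linarith [ht.1]
  have htT : ENNReal.ofReal t ≠ ⊤ := ofReal_ne_top
  set ψc : ℝ → ℝ≥0∞ := clampPsi t ψ with hψc
  have hψcm : Measurable ψc := clampPsi_measurable hψ ht
  have hψceq : ∀ s : ℝ, 0 < s → s ≤ t → ψc s = ψ s := fun s h1 h2 => clampPsi_eq ψ h1 h2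
  set M : ℝ≥0∞ := ⨆ u ∈ DomAbove R t, ψ u * f u with hM
  set hsup : ℝ → ℝ≥0∞ := fun s => ⨆ u ∈ Ioo s t, ψ u * f u with hhsup
  -- level sets and their sup
  set S : ℝ → Set ℝ := fun l => {u : ℝ | u ∈ Ioo (0:ℝ) t ∧ ENNReal.ofReal l < f u} with hS
  set a : ℝ → ℝ := fun l => sSup (S l) with ha
  have hSsub : ∀ l, S l ⊆ Ioo (0:ℝ) t := fun l u hu => hu.1
  have hSbdd : ∀ l, BddAbove (S l) := fun l => (bddAbove_Ioo).mono (hSsub l)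
  have ha0 : ∀ l, 0 ≤ a l := fun l => Real.sSup_nonneg (fun u hu => hu.1.1.le)
  have hat : ∀ l, a l ≤ t := fun l => Real.sSup_le (fun u hu => hu.1.2.le) ht.1.le
  have haanti : Antitone a := by
    intro l1 l2 h12
    rcases eq_empty_or_nonempty (S l2) with he | hne
    · rw [ha]; simp only []
      rw [show S l2 = ∅ from he, Real.sSup_empty]
      exact ha0 l1
    · exact csSup_le_csSup (hSbdd l1) hne
        (fun u hu => ⟨hu.1, lt_of_le_of_lt (ENNReal.ofReal_le_ofReal h12) hu.2⟩)
  have ham : Measurable a := haanti.measurable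
  set g : ℝ → ℝ≥0∞ := fun l => ψc (a l) with hg
  have hganti : Antitone g := fun l1 l2 h12 => clampPsi_monotone hψ ht (haanti h12)
  have hgm : Measurable g := hganti.measurable
  -- key facts about a
  have haS : ∀ l u, u ∈ S l → u ≤ a l := fun l u hu => le_csSup (hSbdd l) hu
  have hIooSub : ∀ l, 0 < a l → Ioo (0:ℝ) (a l) ⊆ {u : ℝ | ENNReal.ofReal l < f u} ∩ Ioo 0 t := by
    intro l hal u hu
    have hne : (S l).Nonempty := by
      by_contra hc
      rw [not_nonempty_iff_eq_empty] at hc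
      rw [ha] at hal; simp only [] at hal
      rw [hc, Real.sSup_empty] at hal; exact lt_irrefl 0 hal
    obtain ⟨u', hu'S, huu'⟩ := exists_lt_of_lt_csSup hne hu.2
    have hu't : u' ∈ Ioo (0:ℝ) t := hu'S.1
    have hut : u ∈ Ioo (0:ℝ) t := ⟨hu.1, lt_trans huu' hu't.2⟩
    have hfle : f u' ≤ f u := hfmono u u' (mem_dom_of_le ht hu.1 hut.2.le) huu'.le
      (mem_dom_of_le ht hu't.1 hu't.2.le)
    exact ⟨lt_of_lt_of_le hu'S.2 hfle, hut⟩
  -- the I integral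
  set I : ℝ≥0∞ := ∫⁻ s in Ioo (0:ℝ) t, (ψc s)⁻¹ with hIdef
  have hIcongr : I = ∫⁻ s in Ioo (0:ℝ) t, 1 / ψ s :=
    setLIntegral_congr_fun measurableSet_Ioo (fun s hs => by
      rw [hψceq s hs.1 hs.2.le, one_div])
  have hIle : I ≤ ENNReal.ofReal C₀ * (ENNReal.ofReal t / ψ t) := by
    rw [hIcongr]; exact hB t ht
  -- F
  set F : ℝ → ℝ → ℝ≥0∞ := fun s l => (ψc s)⁻¹ *
      (g l * ({q : ℝ × ℝ | q.1 < a q.2}).indicator (fun _ => 1) (s, l)) with hF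
  have hFm : Measurable (Function.uncurry F) := by
    have heq : Function.uncurry F = fun p : ℝ × ℝ => (ψc p.1)⁻¹ *
        (g p.2 * ({q : ℝ × ℝ | q.1 < a q.2}).indicator (fun _ => 1) p) := by
      funext p; cases p; rfl
    rw [heq]
    exact ((hψcm.inv).comp measurable_fst).mul ((hgm.comp measurable_snd).mul
      (measurable_const.indicator (measurableSet_lt measurable_fst (ham.comp measurable_snd))))
  -- pointwise core bound
  have hcore1 : ∀ s ∈ Ioo (0:ℝ) t, (ψc s)⁻¹ * hsup s ≤ ∫⁻ l in Ioi (0:ℝ), F s l := by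
    intro s hs
    have hinvT : (ψc s)⁻¹ ≠ ⊤ := by
      rw [hψceq s hs.1 hs.2.le]
      exact ENNReal.inv_ne_top.2 (hψ.2.1 s (mem_dom_of_le ht hs.1 hs.2.le)).1.ne'
    have hHs : hsup s ≤ ∫⁻ l in Ioi (0:ℝ),
        g l * ({q : ℝ × ℝ | q.1 < a q.2}).indicator (fun _ => 1) (s, l) := by
      refine iSup₂_le fun u hu => ?_
      have hu0 : 0 < u := lt_trans hs.1 hu.1
      have heq : ψ u * f u = ∫⁻ l in Ioi (0:ℝ),
          ({l : ℝ | ENNReal.ofReal l < f u}).indicator (fun _ => ψ u) l := by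
        rw [lintegral_indicator_const
            (measurableSet_lt ENNReal.measurable_ofReal measurable_const),
          Measure.restrict_apply
            (measurableSet_lt ENNReal.measurable_ofReal measurable_const),
          vol_ofReal_lt]
      rw [heq]
      refine lintegral_mono_ae (ae_of_all _ fun l => ?_)
      by_cases hl : ENNReal.ofReal l < f u
      · have huS : u ∈ S l := ⟨⟨hu0, hu.2⟩, hl⟩
        have hual : u ≤ a l := haS l u huS
        have hal0 : 0 < a l := lt_of_lt_of_le hu0 hual
        have hsal : s < a l := lt_of_lt_of_le hu.1 hual
        rw [Set.indicator_of_mem (show l ∈ {l' : ℝ | ENNReal.ofReal l' < f u} from hl),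
          Set.indicator_of_mem (show (s, l) ∈ {q : ℝ × ℝ | q.1 < a q.2} from hsal), mul_one,
          hg]
        simp only []
        rw [hψceq (a l) hal0 (hat l)]
        exact hψ.2.2.1 u (a l) hu0.le hual (mem_dom_of_le ht hal0 (hat l))
      · rw [Set.indicator_of_notMem (show l ∉ {l' : ℝ | ENNReal.ofReal l' < f u} from hl)]; exact zero_le
    calc (ψc s)⁻¹ * hsup s
        ≤ (ψc s)⁻¹ * ∫⁻ l in Ioi (0:ℝ),
            g l * ({q : ℝ × ℝ | q.1 < a q.2}).indicator (fun _ => 1) (s, l) :=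
          mul_le_mul_right hHs _
      _ = ∫⁻ l in Ioi (0:ℝ), F s l := (lintegral_const_mul' _ _ hinvT).symm
  -- inner integral bound
  have hinner : ∀ l : ℝ, (∫⁻ s in Ioo (0:ℝ) t, F s l) ≤
      ENNReal.ofReal C₀ * volume ({u : ℝ | ENNReal.ofReal l < f u} ∩ Ioo 0 t) := by
    intro l
    have h1 : (∫⁻ s in Ioo (0:ℝ) t, F s l)
        = ∫⁻ s in Ioo (0:ℝ) (a l), (ψc s)⁻¹ * g l := by
      have heq : ∀ s : ℝ, F s l = (Iio (a l)).indicator (fun s' => (ψc s')⁻¹ * g l) s := by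
        intro s
        by_cases hsl : s < a l
        · rw [hF]; simp only []
          rw [Set.indicator_of_mem (show (s, l) ∈ {q : ℝ × ℝ | q.1 < a q.2} from hsl),
            Set.indicator_of_mem (show s ∈ Iio (a l) from hsl), mul_one]
        · rw [hF]; simp only []
          rw [Set.indicator_of_notMem (show (s, l) ∉ {q : ℝ × ℝ | q.1 < a q.2} from hsl),
            Set.indicator_of_notMem (show s ∉ Iio (a l) from hsl), mul_zero, mul_zero]
      simp_rw [heq]
      rw [lintegral_indicator measurableSet_Iio, Measure.restrict_restrict measurableSet_Iio]
      have hset : Iio (a l) ∩ Ioo (0:ℝ) t = Ioo (0:ℝ) (a l) := by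
        ext x
        simp only [mem_inter_iff, mem_Iio, mem_Ioo]
        constructor
        · rintro ⟨h1, h2, h3⟩; exact ⟨h2, h1⟩
        · rintro ⟨h1, h2⟩; exact ⟨h2, h1, lt_of_lt_of_le h2 (hat l)⟩
      rw [hset]
    rw [h1]
    rcases lt_or_ge 0 (a l) with hal | hal
    · have haldom : a l ∈ DomIoo R := mem_dom_of_le ht hal (hat l)
      have h2 : (∫⁻ s in Ioo (0:ℝ) (a l), (ψc s)⁻¹ * g l)
          = g l * ∫⁻ s in Ioo (0:ℝ) (a l), (ψc s)⁻¹ := by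
        simp_rw [mul_comm ((ψc _)⁻¹) (g l)]
        exact lintegral_const_mul (g l) hψcm.inv
      have h3 : (∫⁻ s in Ioo (0:ℝ) (a l), (ψc s)⁻¹)
          ≤ ENNReal.ofReal C₀ * (ENNReal.ofReal (a l) / ψ (a l)) := by
        have hcongr : (∫⁻ s in Ioo (0:ℝ) (a l), (ψc s)⁻¹)
            = ∫⁻ s in Ioo (0:ℝ) (a l), 1 / ψ s :=
          setLIntegral_congr_fun measurableSet_Ioo (fun s hs => by
            rw [hψceq s hs.1 (le_trans hs.2.le (hat l)), one_div])
        rw [hcongr]; exact hB (a l) haldom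
      have hgl : g l = ψ (a l) := by rw [hg]; simp only []; rw [hψceq (a l) hal (hat l)]
      calc (∫⁻ s in Ioo (0:ℝ) (a l), (ψc s)⁻¹ * g l)
          ≤ g l * (ENNReal.ofReal C₀ * (ENNReal.ofReal (a l) / ψ (a l))) := by
            rw [h2]; exact mul_le_mul_right h3 _
        _ = ENNReal.ofReal C₀ * ENNReal.ofReal (a l) := by
            rw [hgl]
            exact cancel1 (hψ.2.1 (a l) haldom).1.ne' (hψ.2.1 (a l) haldom).2.ne
        _ ≤ ENNReal.ofReal C₀ * volume ({u : ℝ | ENNReal.ofReal l < f u} ∩ Ioo 0 t) := by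
            refine mul_le_mul_right ?_ _
            rw [← sub_zero (a l), ← Real.volume_Ioo]
            exact measure_mono (hIooSub l hal)
    · have : Ioo (0:ℝ) (a l) = ∅ := Ioo_eq_empty (by linarith)
      rw [this]
      simp
  -- the core estimate
  have hcore : (∫⁻ s in Ioo (0:ℝ) t, (ψc s)⁻¹ * hsup s)
      ≤ ENNReal.ofReal C₀ * ∫⁻ u in Ioo (0:ℝ) t, f u := by
    calc (∫⁻ s in Ioo (0:ℝ) t, (ψc s)⁻¹ * hsup s)
        ≤ ∫⁻ s in Ioo (0:ℝ) t, ∫⁻ l in Ioi (0:ℝ), F s l :=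
          lintegral_mono_ae ((ae_restrict_iff' measurableSet_Ioo).2 (ae_of_all _ hcore1))
      _ = ∫⁻ l in Ioi (0:ℝ), ∫⁻ s in Ioo (0:ℝ) t, F s l :=
          lintegral_lintegral_swap hFm.aemeasurable
      _ ≤ ∫⁻ l in Ioi (0:ℝ),
            ENNReal.ofReal C₀ * volume ({u : ℝ | ENNReal.ofReal l < f u} ∩ Ioo 0 t) :=
          lintegral_mono_ae (ae_of_all _ hinner)
      _ = ENNReal.ofReal C₀ *
            ∫⁻ l in Ioi (0:ℝ), volume ({u : ℝ | ENNReal.ofReal l < f u} ∩ Ioo 0 t) :=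
          lintegral_const_mul' _ _ ofReal_ne_top
      _ = ENNReal.ofReal C₀ * ∫⁻ u in Ioo (0:ℝ) t, f u := by rw [layercake t hfm]
  -- pointwise bound for Tsup on (0,t)
  have hpt : ∀ s ∈ Ioo (0:ℝ) t, Tsup R ψ f s ≤
      (ψc s)⁻¹ * hsup s + ((ψ t * f t) * (ψc s)⁻¹ + M * (ψc s)⁻¹) := by
    intro s hs
    have hsplit : (⨆ u ∈ DomAbove R s, ψ u * f u) ≤ hsup s + (ψ t * f t + M) := by
      refine iSup₂_le fun u hu => ?_
      rcases lt_trichotomy u t with h | h | h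
      · exact le_trans (le_iSup₂_of_le u ⟨hu.1, h⟩ le_rfl) le_self_add
      · subst h
        exact le_trans le_self_add le_add_self
      · exact le_trans (le_trans (le_iSup₂_of_le u ⟨h, hu.2⟩ le_rfl) le_add_self) le_add_self
    calc Tsup R ψ f s = (⨆ u ∈ DomAbove R s, ψ u * f u) / ψ s := rfl
      _ ≤ (hsup s + (ψ t * f t + M)) / ψ s := ENNReal.div_le_div_right hsplit _
      _ = hsup s / ψ s + ((ψ t * f t) / ψ s + M / ψ s) := by
          rw [ENNReal.add_div, ENNReal.add_div]
      _ = (ψc s)⁻¹ * hsup s + ((ψ t * f t) * (ψc s)⁻¹ + M * (ψc s)⁻¹) := by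
          rw [hψceq s hs.1 hs.2.le, div_eq_mul_inv, div_eq_mul_inv, div_eq_mul_inv,
            mul_comm (hsup s)]
  -- split the integral
  have hsplit2 : (∫⁻ s in Ioo (0:ℝ) t, Tsup R ψ f s) ≤
      (∫⁻ s in Ioo (0:ℝ) t, (ψc s)⁻¹ * hsup s) + ((ψ t * f t) * I + M * I) := by
    calc (∫⁻ s in Ioo (0:ℝ) t, Tsup R ψ f s)
        ≤ ∫⁻ s in Ioo (0:ℝ) t,
            ((ψc s)⁻¹ * hsup s + ((ψ t * f t) * (ψc s)⁻¹ + M * (ψc s)⁻¹)) :=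
          lintegral_mono_ae ((ae_restrict_iff' measurableSet_Ioo).2 (ae_of_all _ hpt))
      _ = (∫⁻ s in Ioo (0:ℝ) t, (ψc s)⁻¹ * hsup s) +
            ∫⁻ s in Ioo (0:ℝ) t, ((ψ t * f t) * (ψc s)⁻¹ + M * (ψc s)⁻¹) :=
          lintegral_add_right _ ((measurable_const.mul hψcm.inv).add
            (measurable_const.mul hψcm.inv))
      _ = (∫⁻ s in Ioo (0:ℝ) t, (ψc s)⁻¹ * hsup s) + ((ψ t * f t) * I + M * I) := by
          rw [lintegral_add_left (show Measurable fun s => (ψ t * f t) * (ψc s)⁻¹ from measurable_const.mul hψcm.inv),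
            lintegral_const_mul _ (show Measurable fun s => (ψc s)⁻¹ from hψcm.inv),
            lintegral_const_mul _ (show Measurable fun s => (ψc s)⁻¹ from hψcm.inv)]
  set J : ℝ≥0∞ := ∫⁻ u in Ioo (0:ℝ) t, f u with hJ
  have h2 : (ψ t * f t) * I ≤ ENNReal.ofReal C₀ * J := by
    calc (ψ t * f t) * I
        ≤ (ψ t * f t) * (ENNReal.ofReal C₀ * (ENNReal.ofReal t / ψ t)) :=
          mul_le_mul_right hIle _
      _ = ENNReal.ofReal C₀ * ENNReal.ofReal t * f t := cancel2 hψt0 hψtT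
      _ ≤ ENNReal.ofReal C₀ * J := by
          rw [mul_assoc]
          refine mul_le_mul_right ?_ _
          calc ENNReal.ofReal t * f t = ∫⁻ _ in Ioo (0:ℝ) t, f t := by
                rw [setLIntegral_const, Real.volume_Ioo, sub_zero, mul_comm]
            _ ≤ J := lintegral_mono_ae ((ae_restrict_iff' measurableSet_Ioo).2
                (ae_of_all _ fun u hu =>
                  hfmono u t (mem_dom_of_le ht hu.1 hu.2.le) hu.2.le ht))
  have h3 : M * I ≤ ENNReal.ofReal C₀ * ENNReal.ofReal t * Tsup R ψ f t := by
    calc M * I ≤ M * (ENNReal.ofReal C₀ * (ENNReal.ofReal t / ψ t)) := mul_le_mul_right hIle _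
      _ = ENNReal.ofReal C₀ * ENNReal.ofReal t * (M / ψ t) := by
          rw [div_eq_mul_inv, div_eq_mul_inv]; ring
      _ = ENNReal.ofReal C₀ * ENNReal.ofReal t * Tsup R ψ f t := rfl
  have hsum := le_trans hsplit2 (add_le_add hcore (add_le_add h2 h3))
  have hfinal : (∫⁻ s in Ioo (0:ℝ) t, Tsup R ψ f s) ≤
      (ENNReal.ofReal (2 * C₀) * (Tsup R ψ f t + dstar f t)) * ENNReal.ofReal t := by
    have h2C : ENNReal.ofReal (2 * C₀) = 2 * ENNReal.ofReal C₀ := by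
      rw [ENNReal.ofReal_mul (by norm_num)]; norm_num
    have hdm : dstar f t * ENNReal.ofReal t = J := ENNReal.div_mul_cancel htO htT
    have expand : (ENNReal.ofReal (2 * C₀) * (Tsup R ψ f t + dstar f t)) * ENNReal.ofReal t
        = 2 * ENNReal.ofReal C₀ * J +
          2 * (ENNReal.ofReal C₀ * ENNReal.ofReal t * Tsup R ψ f t) := by
      rw [h2C, mul_add, add_mul, mul_assoc (2 * ENNReal.ofReal C₀) (dstar f t) _, hdm]
      ring
    rw [expand]
    refine le_trans hsum ?_
    calc ENNReal.ofReal C₀ * J + (ENNReal.ofReal C₀ * J +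
          ENNReal.ofReal C₀ * ENNReal.ofReal t * Tsup R ψ f t)
        = 2 * ENNReal.ofReal C₀ * J +
            ENNReal.ofReal C₀ * ENNReal.ofReal t * Tsup R ψ f t := by ring
      _ ≤ 2 * ENNReal.ofReal C₀ * J +
            2 * (ENNReal.ofReal C₀ * ENNReal.ofReal t * Tsup R ψ f t) := by
          refine add_le_add_right ?_ _
          exact le_mul_of_one_le_left zero_le one_le_two
  show dstar (Tsup R ψ f) t ≤ _
  unfold dstar
  rw [ENNReal.div_le_iff htO htT]
  exact hfinal

/-- `(T_ψ f)** ≲ T_ψ f + f**` holds for all nonneg. nonincreasing `f` iff `ψ ∈ B`. -/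
theorem statement7 (R : ℝ≥0∞) (hR : 0 < R) (ψ : ℝ → ℝ≥0∞)
    (hψ : QuasiConcaveOn R ψ) :
    (∃ C : ℝ, 0 < C ∧ ∀ f : ℝ → ℝ≥0∞, NonincOn R f → ∀ t ∈ DomIoo R,
        dstar (Tsup R ψ f) t ≤ ENNReal.ofReal C * (Tsup R ψ f t + dstar f t)) ↔
      BCond R ψ := by
  exact ⟨fun h => necessity R ψ hψ h, fun h => sufficiency R ψ hψ h⟩
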